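/- Let U, V be nonempty finite sets, F = {f_{u,v} : D → R}_{(u,v)∈U×V} a family of functions between finite sets with R nonempty, and BAD ⊆ D* × U a left-monotone set. Fix t ∈ ℕ and suppose that for every sequence q = (q₁,…,q_m) of at most t distinct elements of D: (1) for every u ∈ U with (q, u) ∉ BAD, the tuple (f_{u,v}(q₁),…,f_{u,v}(q_m)), for v uniform in V, is uniform over R^m; and (2) Pr_{u←U}[(q,u) ∈ BAD] ≤ ε. Then for every deterministic adaptive t-query oracle distinguisher D making distinct queries, |Pr_{(u,v)←U×V}[D^{f_{u,v}} = 1] − Pr_{π←Π}[D^π = 1]| ≤ ε, where Π is the uniform distribution over all functions D → R. -/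

import Mathlib

open Finset


/-- Answer transcript of a deterministic adaptive oracle algorithm with next-query
function `nq` against oracle `g`: the list of the first `n` answers. -/
def transcript {D R : Type*} (nq : List R → D) (g : D → R) : ℕ → List R
  | 0 => []
  | n + 1 => transcript nq g n ++ [g (nq (transcript nq g n))]

/-- The queries a deterministic adaptive algorithm makes when fed the answer list
`a`: the `i`-th query is determined by the first `i-1` answers. -/
def queryList {D R : Type*} (nq : List R → D) (a : List R) : List D :=
  (List.range a.length).map (fun i => nq (a.take i))

section Aux
variable {D R : Type*}

theorem my_concat {R : Type*} (l : List R) (h : l ≠ []) : ∃ b r, l = b ++ [r] := by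
  induction l using List.reverseRecOn with
  | nil => exact absurd rfl h
  | append_singleton b r _ => exact ⟨b, r, rfl⟩

theorem transcript_length (nq : List R → D) (g : D → R) :
    ∀ n, (transcript nq g n).length = n
  | 0 => rfl
  | n + 1 => by simp [transcript, transcript_length nq g n]

theorem queryList_length (nq : List R → D) (a : List R) :
    (queryList nq a).length = a.length := by simp [queryList]

theorem queryList_concat (nq : List R → D) (b : List R) (r : R) :
    queryList nq (b ++ [r]) = queryList nq b ++ [nq b] := by
  unfold queryList
  rw [List.length_append]
  simp only [List.length_singleton, List.range_succ, List.map_append]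
  congr 1
  · exact List.map_congr_left fun i hi => by
      rw [List.take_append_of_le_length (Nat.le_of_lt (List.mem_range.mp hi))]
  · simp [List.take_left]

theorem transcript_eq_iff (nq : List R → D) (g : D → R) :
    ∀ (n : ℕ) (a : List R), a.length = n →
      (transcript nq g n = a ↔ (queryList nq a).map g = a) := by
  intro n
  induction n with
  | zero =>
    intro a ha
    rw [List.length_eq_zero_iff] at ha
    subst ha
    simp [transcript, queryList]
  | succ n ih =>
    intro a ha
    obtain ⟨b, r, rfl⟩ := my_concat a (by
      intro h; rw [h] at ha; simp at ha)
    have hb : b.length = n := by simpa using ha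
    have happ : ∀ (X : List R) (x : R), X.length = b.length →
        (X ++ [x] = b ++ [r] ↔ X = b ∧ x = r) := by
      intro X x h
      constructor
      · intro he
        obtain ⟨h1, h2⟩ := List.append_inj he h
        exact ⟨h1, by simpa using h2⟩
      · rintro ⟨rfl, rfl⟩; rfl
    rw [queryList_concat, List.map_append]
    show transcript nq g n ++ [g (nq (transcript nq g n))] = b ++ [r] ↔ _
    rw [happ _ _ ((transcript_length nq g n).trans hb.symm),
        List.map_singleton,
        happ _ _ (by rw [List.length_map, queryList_length, hb])]
    constructor
    · rintro ⟨h1, h2⟩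
      refine ⟨(ih b hb).mp h1, ?_⟩
      rw [h1] at h2; exact h2
    · rintro ⟨h1, h2⟩
      have h3 := (ih b hb).mpr h1
      exact ⟨h3, by rw [h3]; exact h2⟩

end Aux

def tuples (R : Type*) [Fintype R] [DecidableEq R] : ℕ → Finset (List R)
  | 0 => {[]}
  | n + 1 => ((tuples R n) ×ˢ (univ : Finset R)).image (fun p => p.1 ++ [p.2])

theorem mem_tuples {R : Type*} [Fintype R] [DecidableEq R] :
    ∀ (n : ℕ) (a : List R), a ∈ tuples R n ↔ a.length = n
  | 0, a => by simp [tuples, List.length_eq_zero_iff]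
  | n + 1, a => by
    simp only [tuples, mem_image, mem_product, mem_univ, and_true]
    constructor
    · rintro ⟨⟨b, r⟩, hb, rfl⟩
      simp [(mem_tuples n b).mp hb]
    · intro ha
      obtain ⟨b, r, rfl⟩ := my_concat a (by
        intro h; rw [h] at ha; simp at ha)
      exact ⟨(b, r), (mem_tuples n b).mpr (by simpa using ha), rfl⟩

theorem card_tuples_le {R : Type*} [Fintype R] [DecidableEq R] :
    ∀ n : ℕ, (tuples R n).card ≤ Fintype.card R ^ n
  | 0 => by simp [tuples]
  | n + 1 => by
    calc (tuples R (n+1)).card ≤ ((tuples R n) ×ˢ (univ : Finset R)).card :=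
          Finset.card_image_le
    _ = (tuples R n).card * Fintype.card R := by rw [Finset.card_product, Finset.card_univ]
    _ ≤ Fintype.card R ^ n * Fintype.card R :=
          Nat.mul_le_mul_right _ (card_tuples_le n)
    _ = Fintype.card R ^ (n + 1) := (pow_succ _ _).symm

theorem card_filter_prod {α β : Type*} [Fintype α] [Fintype β] (P : α → β → Prop)
    [∀ a b, Decidable (P a b)] :
    ((univ : Finset (α × β)).filter (fun p => P p.1 p.2)).card
      = ∑ x : α, (univ.filter (fun y => P x y)).card := by
  simp only [Finset.card_filter]
  rw [Fintype.sum_prod_type]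

theorem count_agree {D R : Type*} [Fintype D] [Fintype R] [DecidableEq D] [DecidableEq R] :
    ∀ (q : List D) (ys : List R), q.Nodup → ys.length = q.length →
      ((univ : Finset (D → R)).filter (fun g => q.map g = ys)).card
          * (Fintype.card R) ^ q.length = Fintype.card (D → R) := by
  intro q
  induction q with
  | nil =>
    intro ys _ hlen
    rw [List.length_nil, List.length_eq_zero_iff] at hlen
    subst hlen
    simp
  | cons d q' ih =>
    intro ys hnd hlen
    obtain ⟨y, ys', rfl⟩ : ∃ y ys', ys = y :: ys' := by
      cases ys with
      | nil => simp at hlen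
      | cons y ys' => exact ⟨y, ys', rfl⟩
    have hd : d ∉ q' := (List.nodup_cons.mp hnd).1
    have hnd' : q'.Nodup := (List.nodup_cons.mp hnd).2
    have hlen' : ys'.length = q'.length := by simpa using hlen
    set s : Finset (D → R) := univ.filter (fun g => q'.map g = ys') with hs
    have hmap : ∀ (g : D → R) (c : R), q'.map (Function.update g d c) = q'.map g := by
      intro g c
      refine List.map_congr_left fun x hx => ?_
      apply Function.update_of_ne
      intro hxd; exact hd (hxd ▸ hx)
    have hfib : ∀ y' : R, (s.filter (fun g => g d = y')).card
        = (s.filter (fun g => g d = y)).card := by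
      intro y'
      refine Finset.card_bij' (fun g _ => Function.update g d y)
        (fun g _ => Function.update g d y') ?_ ?_ ?_ ?_
      · intro g hg
        simp only [hs, mem_filter, mem_univ, true_and] at hg ⊢
        exact ⟨(hmap g y).trans hg.1, Function.update_self _ _ _⟩
      · intro g hg
        simp only [hs, mem_filter, mem_univ, true_and] at hg ⊢
        exact ⟨(hmap g y').trans hg.1, Function.update_self _ _ _⟩
      · intro g hg
        simp only [hs, mem_filter, mem_univ, true_and] at hg
        funext x
        by_cases hx : x = d
        · subst hx; simp [hg.2]
        · simp [Function.update_of_ne hx]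
      · intro g hg
        simp only [hs, mem_filter, mem_univ, true_and] at hg
        funext x
        by_cases hx : x = d
        · subst hx; simp [hg.2]
        · simp [Function.update_of_ne hx]
    have hsum : s.card = ∑ y' : R, (s.filter (fun g => g d = y')).card :=
      Finset.card_eq_sum_card_fiberwise (fun g _ => mem_univ (g d))
    have hscard : s.card = Fintype.card R * (s.filter (fun g => g d = y)).card := by
      rw [hsum, Finset.sum_congr rfl (fun y' _ => hfib y'), Finset.sum_const, Finset.card_univ,
        smul_eq_mul]
    have htarget : (univ : Finset (D → R)).filter (fun g => (d :: q').map g = y :: ys')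
        = s.filter (fun g => g d = y) := by
      rw [hs, Finset.filter_filter]
      apply Finset.filter_congr
      intro g _
      simp only [List.map_cons, List.cons.injEq]
      tauto
    rw [htarget, List.length_cons, pow_succ']
    calc (s.filter (fun g => g d = y)).card * (Fintype.card R * Fintype.card R ^ q'.length)
        = (Fintype.card R * (s.filter (fun g => g d = y)).card) * Fintype.card R ^ q'.length := by
          ring
      _ = s.card * Fintype.card R ^ q'.length := by rw [hscard]
      _ = Fintype.card (D → R) := ih ys' hnd' hlen'

theorem count_by_transcript {W D R : Type*} [Fintype W] [Fintype R] [DecidableEq R]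
    (nq : List R → D) (ora : W → D → R) (k : ℕ) (pred : List R → Prop) [DecidablePred pred]
    (cnt : ℕ)
    (hcnt : ∀ a : List R, a.length = k → pred a →
      ((univ : Finset W).filter (fun w => transcript nq (ora w) k = a)).card
        * (Fintype.card R) ^ k = cnt) :
    ((univ : Finset W).filter (fun w => pred (transcript nq (ora w) k))).card
        * (Fintype.card R) ^ k
      = ((tuples R k).filter pred).card * cnt := by
  rw [Finset.card_eq_sum_card_fiberwise
      (f := fun w => transcript nq (ora w) k) (t := (tuples R k).filter pred)
      (fun w hw => by
        simp only [Finset.mem_coe, mem_filter, mem_univ, true_and] at hw ⊢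
        exact ⟨(mem_tuples k _).mpr (transcript_length nq (ora w) k), hw⟩)]
  rw [Finset.sum_mul]
  rw [Finset.sum_congr rfl (fun a ha => ?_), Finset.sum_const, smul_eq_mul]
  obtain ⟨hmem, hpred⟩ := Finset.mem_filter.mp ha
  rw [Finset.filter_filter]
  have heq : ((univ : Finset W).filter
        (fun w => pred (transcript nq (ora w) k) ∧ transcript nq (ora w) k = a))
      = (univ : Finset W).filter (fun w => transcript nq (ora w) k = a) := by
    apply Finset.filter_congr
    intro w _
    constructor
    · exact fun h => h.2
    · exact fun h => ⟨h ▸ hpred, h⟩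
  rw [heq]
  exact hcnt a ((mem_tuples k _).mp hmem) hpred

theorem queryList_nil {D R : Type*} (nq : List R → D) : queryList nq [] = [] := by
  simp [queryList]

theorem card_filter_split {α : Type*} (s : Finset α) (P Q : α → Prop)
    [DecidablePred P] [DecidablePred Q] (h : ∀ x, Q x → P x) :
    (s.filter P).card = (s.filter Q).card + (s.filter (fun x => ¬ Q x ∧ P x)).card := by
  rw [← Finset.card_filter_add_card_filter_not (s := s.filter P) (p := Q)]
  congr 1
  · rw [Finset.filter_filter]
    exact congrArg Finset.card
      (Finset.filter_congr fun x _ => ⟨fun hx => hx.2, fun hx => ⟨h x hx, hx⟩⟩)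
  · rw [Finset.filter_filter]
    exact congrArg Finset.card (Finset.filter_congr fun x _ => by tauto)

theorem stopping {U V D R : Type*} [Fintype V] [Fintype R] [DecidableEq D] [DecidableEq R]
    (f : U → V → D → R) (BAD : List D → U → Prop) [∀ s u, Decidable (BAD s u)]
    (hmono : ∀ (s₁ : List D) (u : U), BAD s₁ u → ∀ s₂ : List D, s₁ <+: s₂ → BAD s₂ u)
    (nq : List R → D) (t : ℕ) (u : U)
    (hV : ∀ k, k ≤ t → ∀ a : List R, a.length = k → ¬ BAD (queryList nq a) u →
      ((univ : Finset V).filter (fun v => transcript nq (f u v) k = a)).card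
        * (Fintype.card R) ^ k = Fintype.card V) :
    ∀ k, k ≤ t →
      ((univ : Finset V).filter
          (fun v => BAD (queryList nq (transcript nq (f u v) k)) u)).card
          * (Fintype.card R) ^ k
        ≤ ((tuples R k).filter (fun a => BAD (queryList nq a) u)).card * Fintype.card V := by
  intro k
  induction k with
  | zero =>
    intro _
    by_cases hB : BAD (queryList nq ([] : List R)) u
    · simp [transcript, tuples, Finset.filter_singleton, hB]
    · simp [transcript, tuples, Finset.filter_singleton, hB]
  | succ k ihk =>
    intro hk1
    have hk : k ≤ t := Nat.le_of_succ_le hk1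
    have IH := ihk hk
    have h0 : ((univ : Finset V).filter
          (fun v => BAD (queryList nq (transcript nq (f u v) (k+1))) u))
        = ((univ : Finset V).filter
          (fun v => BAD (queryList nq (transcript nq (f u v) k)
            ++ [nq (transcript nq (f u v) k)]) u)) := by
      refine Finset.filter_congr fun v _ => ?_
      rw [show transcript nq (f u v) (k+1)
            = transcript nq (f u v) k ++ [f u v (nq (transcript nq (f u v) k))] from rfl,
          queryList_concat]
    rw [h0]
    rw [card_filter_split (univ : Finset V)
        (fun v => BAD (queryList nq (transcript nq (f u v) k)
          ++ [nq (transcript nq (f u v) k)]) u)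
        (fun v => BAD (queryList nq (transcript nq (f u v) k)) u)
        (fun v hv => hmono _ u hv _ (List.prefix_append _ _))]
    set pred : List R → Prop := fun c => ¬ BAD (queryList nq c) u
        ∧ BAD (queryList nq c ++ [nq c]) u with hpred
    have e2 : ((univ : Finset V).filter
          (fun v => ¬ BAD (queryList nq (transcript nq (f u v) k)) u
            ∧ BAD (queryList nq (transcript nq (f u v) k)
              ++ [nq (transcript nq (f u v) k)]) u)).card * Fintype.card R ^ k
        = ((tuples R k).filter pred).card * Fintype.card V :=
      count_by_transcript nq (fun v => f u v) k pred (Fintype.card V)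
        (fun a ha hpa => hV k hk a ha hpa.1)
    have minj : Function.Injective (fun p : List R × R => p.1 ++ [p.2]) := by
      rintro ⟨b1, r1⟩ ⟨b2, r2⟩ h
      simp only at h
      have hlen : b1.length = b2.length := by
        have := congrArg List.length h; simpa using this
      obtain ⟨h1, h2⟩ := List.append_inj h hlen
      simp only [List.cons.injEq, and_true] at h2
      simp [h1, h2]
    have hB : ((tuples R (k+1)).filter (fun a => BAD (queryList nq a) u)).card
        = (((tuples R k).filter (fun a => BAD (queryList nq a) u)).card
            + ((tuples R k).filter pred).card) * Fintype.card R := by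
      show ((((tuples R k) ×ˢ (univ : Finset R)).image
          (fun p => p.1 ++ [p.2])).filter (fun a => BAD (queryList nq a) u)).card = _
      rw [Finset.filter_image, Finset.card_image_of_injective _ minj]
      have hpe : (((tuples R k) ×ˢ (univ : Finset R)).filter
            (fun p => BAD (queryList nq (p.1 ++ [p.2])) u))
          = ((tuples R k).filter
              (fun c => BAD (queryList nq c ++ [nq c]) u)) ×ˢ (univ : Finset R) := by
        ext ⟨c, r⟩
        simp only [Finset.mem_filter, Finset.mem_product, Finset.mem_univ, and_true,
          queryList_concat]
      rw [hpe, Finset.card_product, Finset.card_univ]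
      congr 1
      rw [card_filter_split (tuples R k)
          (fun c => BAD (queryList nq c ++ [nq c]) u)
          (fun c => BAD (queryList nq c) u)
          (fun c hc => hmono _ u hc _ (List.prefix_append _ _))]
    rw [hB]
    set A1 := ((univ : Finset V).filter
        (fun v => BAD (queryList nq (transcript nq (f u v) k)) u)).card
    set A2 := ((univ : Finset V).filter
        (fun v => ¬ BAD (queryList nq (transcript nq (f u v) k)) u
          ∧ BAD (queryList nq (transcript nq (f u v) k)
            ++ [nq (transcript nq (f u v) k)]) u)).card
    set Bk := ((tuples R k).filter (fun a => BAD (queryList nq a) u)).card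
    set Ck := ((tuples R k).filter pred).card
    calc (A1 + A2) * Fintype.card R ^ (k + 1)
        = A1 * Fintype.card R ^ k * Fintype.card R
          + A2 * Fintype.card R ^ k * Fintype.card R := by rw [pow_succ]; ring
      _ ≤ Bk * Fintype.card V * Fintype.card R
          + Ck * Fintype.card V * Fintype.card R :=
          Nat.add_le_add (Nat.mul_le_mul_right _ IH) (le_of_eq (by rw [e2]))
      _ = (Bk + Ck) * Fintype.card R * Fintype.card V := by ring

theorem card_filter_split2 {α : Type*} (s : Finset α) (P Q : α → Prop)
    [DecidablePred P] [DecidablePred Q] :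
    (s.filter P).card = (s.filter (fun x => P x ∧ Q x)).card
      + (s.filter (fun x => P x ∧ ¬ Q x)).card := by
  rw [← Finset.card_filter_add_card_filter_not (s := s.filter P) (p := Q),
    Finset.filter_filter, Finset.filter_filter]

/-- framework lemma: Let `f : U × V → (D → R)` be a function family and
`BAD` a left-monotone set of (query-sequence, `u`) pairs. Assume that for every
sequence of at most `t` distinct queries: (1) for every `u` with `(q, u) ∉ BAD`, the
answers under uniform `v ∈ V` are uniform over `R^{|q|}`; and (2) the probability
over uniform `u ∈ U` that `(q, u) ∈ BAD` is at most `ε`. Then every deterministic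
adaptive `t`-query distinguisher making distinct queries distinguishes `f_{u,v}`
(uniform `(u,v)`) from a uniform function with advantage at most `ε`. -/
theorem stmt_8 {U V D R : Type*} [Fintype U] [Fintype V] [Fintype D] [Fintype R]
    [Nonempty U] [Nonempty V] [Nonempty R] [DecidableEq D] [DecidableEq R]
    (f : U → V → D → R) (BAD : List D → U → Prop) [∀ s u, Decidable (BAD s u)]
    (hmono : ∀ (s₁ : List D) (u : U), BAD s₁ u → ∀ s₂ : List D, s₁ <+: s₂ → BAD s₂ u)
    (t : ℕ) (ε : ℝ)
    (h1 : ∀ q : List D, q.length ≤ t → q.Nodup → ∀ u : U, ¬ BAD q u →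
      ∀ ys : List R, ys.length = q.length →
        (Finset.univ.filter (fun v : V => q.map (f u v) = ys)).card
          * (Fintype.card R) ^ q.length = Fintype.card V)
    (h2 : ∀ q : List D, q.length ≤ t → q.Nodup →
      ((Finset.univ.filter (fun u : U => BAD q u)).card : ℝ) ≤ ε * Fintype.card U)
    (nq : List R → D) (out : List R → Bool)
    (hdistinct : ∀ a : List R, a.length ≤ t → (queryList nq a).Nodup) :
    |((Finset.univ.filter (fun uv : U × V =>
          out (transcript nq (f uv.1 uv.2) t) = true)).card : ℝ)
        / (Fintype.card U * Fintype.card V)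
      - ((Finset.univ.filter (fun g : D → R =>
          out (transcript nq g t) = true)).card : ℝ)
        / Fintype.card (D → R)| ≤ ε := by
  classical
  -- basic positivity
  have hcU : (0:ℝ) < Fintype.card U := by exact_mod_cast Fintype.card_pos
  have hcV : (0:ℝ) < Fintype.card V := by exact_mod_cast Fintype.card_pos
  have hcF : (0:ℝ) < Fintype.card (D → R) := by exact_mod_cast Fintype.card_pos
  have hcR : (0:ℝ) < Fintype.card R := by exact_mod_cast Fintype.card_pos
  have hRt : (0:ℝ) < (Fintype.card R : ℝ) ^ t := pow_pos hcR t
  have hε0 : 0 ≤ ε := by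
    have h := h2 [] (Nat.zero_le t) List.nodup_nil
    have h0 : (0:ℝ) ≤ ((Finset.univ.filter (fun u : U => BAD [] u)).card : ℝ) := by
      positivity
    nlinarith
  -- per-u and per-a counting facts
  have Vcnt : ∀ u : U, ∀ k, k ≤ t → ∀ a : List R, a.length = k →
      ¬ BAD (queryList nq a) u →
      ((Finset.univ : Finset V).filter (fun v => transcript nq (f u v) k = a)).card
        * (Fintype.card R) ^ k = Fintype.card V := by
    intro u k hk a ha hbad
    have halen : a.length ≤ t := ha ▸ hk
    have hql : (queryList nq a).length = a.length := queryList_length nq a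
    have hnodup := hdistinct a halen
    have hfe : ((Finset.univ : Finset V).filter (fun v => transcript nq (f u v) k = a))
        = ((Finset.univ : Finset V).filter (fun v => (queryList nq a).map (f u v) = a)) :=
      Finset.filter_congr fun v _ => transcript_eq_iff nq (f u v) k a ha
    rw [hfe]
    have h := h1 (queryList nq a) (by rw [hql]; exact halen) hnodup u hbad a hql.symm
    rw [hql, ha] at h
    exact h
  have Gcnt : ∀ a : List R, a.length = t →
      ((Finset.univ : Finset (D → R)).filter (fun g => transcript nq g t = a)).card
        * (Fintype.card R) ^ t = Fintype.card (D → R) := by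
    intro a ha
    have hql : (queryList nq a).length = a.length := queryList_length nq a
    have hfe : ((Finset.univ : Finset (D → R)).filter (fun g => transcript nq g t = a))
        = ((Finset.univ : Finset (D → R)).filter (fun g => (queryList nq a).map g = a)) :=
      Finset.filter_congr fun g _ => transcript_eq_iff nq g t a ha
    rw [hfe]
    have h := count_agree (queryList nq a) a (hdistinct a (le_of_eq ha)) hql.symm
    rw [hql, ha] at h
    exact h
  -- the per-u key estimate
  have key : ∀ u : U,
      |(((Finset.univ : Finset V).filter
            (fun v => out (transcript nq (f u v) t) = true)).card : ℝ)
          / Fintype.card V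
        - (((Finset.univ : Finset (D → R)).filter
            (fun g => out (transcript nq g t) = true)).card : ℝ)
          / Fintype.card (D → R)|
      ≤ (((tuples R t).filter (fun a => BAD (queryList nq a) u)).card : ℝ)
          / (Fintype.card R : ℝ) ^ t := by
    intro u
    -- split counts
    have hsplitV := card_filter_split2 (Finset.univ : Finset V)
      (fun v => out (transcript nq (f u v) t) = true)
      (fun v => BAD (queryList nq (transcript nq (f u v) t)) u)
    have hsplitG := card_filter_split2 (Finset.univ : Finset (D → R))
      (fun g => out (transcript nq g t) = true)
      (fun g => BAD (queryList nq (transcript nq g t)) u)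
    -- good-part equalities
    have e1 : ((Finset.univ : Finset V).filter
          (fun v => out (transcript nq (f u v) t) = true
            ∧ ¬ BAD (queryList nq (transcript nq (f u v) t)) u)).card
          * (Fintype.card R) ^ t
        = ((tuples R t).filter
            (fun a => out a = true ∧ ¬ BAD (queryList nq a) u)).card * Fintype.card V :=
      count_by_transcript nq (fun v => f u v) t
        (fun a => out a = true ∧ ¬ BAD (queryList nq a) u) (Fintype.card V)
        (fun a ha hp => Vcnt u t le_rfl a ha hp.2)
    have e2 : ((Finset.univ : Finset (D → R)).filter
          (fun g => out (transcript nq g t) = true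
            ∧ ¬ BAD (queryList nq (transcript nq g t)) u)).card
          * (Fintype.card R) ^ t
        = ((tuples R t).filter
            (fun a => out a = true ∧ ¬ BAD (queryList nq a) u)).card
              * Fintype.card (D → R) :=
      count_by_transcript nq (fun g => g) t
        (fun a => out a = true ∧ ¬ BAD (queryList nq a) u) (Fintype.card (D → R))
        (fun a ha _ => Gcnt a ha)
    have e3 : ((Finset.univ : Finset (D → R)).filter
          (fun g => BAD (queryList nq (transcript nq g t)) u)).card
          * (Fintype.card R) ^ t
        = ((tuples R t).filter (fun a => BAD (queryList nq a) u)).card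
            * Fintype.card (D → R) :=
      count_by_transcript nq (fun g => g) t
        (fun a => BAD (queryList nq a) u) (Fintype.card (D → R))
        (fun a ha _ => Gcnt a ha)
    have e4 : ((Finset.univ : Finset V).filter
          (fun v => BAD (queryList nq (transcript nq (f u v) t)) u)).card
          * (Fintype.card R) ^ t
        ≤ ((tuples R t).filter (fun a => BAD (queryList nq a) u)).card
            * Fintype.card V :=
      stopping f BAD hmono nq t u (Vcnt u) t le_rfl
    -- subset inequalities
    have s1 : ((Finset.univ : Finset V).filter
          (fun v => out (transcript nq (f u v) t) = true
            ∧ BAD (queryList nq (transcript nq (f u v) t)) u)).card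
        ≤ ((Finset.univ : Finset V).filter
          (fun v => BAD (queryList nq (transcript nq (f u v) t)) u)).card := by
      apply Finset.card_le_card
      intro v hv
      simp only [Finset.mem_filter] at hv ⊢
      exact ⟨hv.1, hv.2.2⟩
    have s2 : ((Finset.univ : Finset (D → R)).filter
          (fun g => out (transcript nq g t) = true
            ∧ BAD (queryList nq (transcript nq g t)) u)).card
        ≤ ((Finset.univ : Finset (D → R)).filter
          (fun g => BAD (queryList nq (transcript nq g t)) u)).card := by
      apply Finset.card_le_card
      intro g hg
      simp only [Finset.mem_filter] at hg ⊢
      exact ⟨hg.1, hg.2.2⟩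
    -- move to the reals
    set cvg := ((Finset.univ : Finset V).filter
      (fun v => out (transcript nq (f u v) t) = true
        ∧ ¬ BAD (queryList nq (transcript nq (f u v) t)) u)).card
    set cvb := ((Finset.univ : Finset V).filter
      (fun v => out (transcript nq (f u v) t) = true
        ∧ BAD (queryList nq (transcript nq (f u v) t)) u)).card
    set cgg := ((Finset.univ : Finset (D → R)).filter
      (fun g => out (transcript nq g t) = true
        ∧ ¬ BAD (queryList nq (transcript nq g t)) u)).card
    set cgb := ((Finset.univ : Finset (D → R)).filter
      (fun g => out (transcript nq g t) = true
        ∧ BAD (queryList nq (transcript nq g t)) u)).card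
    set AuC := ((tuples R t).filter
      (fun a => out a = true ∧ ¬ BAD (queryList nq a) u)).card
    set BuC := ((tuples R t).filter (fun a => BAD (queryList nq a) u)).card
    rw [hsplitV, hsplitG]
    have r1 : (cvg : ℝ) / Fintype.card V = (AuC : ℝ) / (Fintype.card R : ℝ) ^ t := by
      rw [div_eq_div_iff hcV.ne' hRt.ne']
      exact_mod_cast e1
    have r2 : (cgg : ℝ) / Fintype.card (D → R) = (AuC : ℝ) / (Fintype.card R : ℝ) ^ t := by
      rw [div_eq_div_iff hcF.ne' hRt.ne']
      exact_mod_cast e2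
    have r3 : (cgb : ℝ) / Fintype.card (D → R) ≤ (BuC : ℝ) / (Fintype.card R : ℝ) ^ t := by
      rw [div_le_div_iff₀ hcF hRt]
      have : cgb * (Fintype.card R) ^ t ≤ BuC * Fintype.card (D → R) :=
        e3 ▸ Nat.mul_le_mul_right _ s2
      exact_mod_cast this
    have r4 : (cvb : ℝ) / Fintype.card V ≤ (BuC : ℝ) / (Fintype.card R : ℝ) ^ t := by
      rw [div_le_div_iff₀ hcV hRt]
      have : cvb * (Fintype.card R) ^ t ≤ BuC * Fintype.card V :=
        le_trans (Nat.mul_le_mul_right _ s1) e4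
      exact_mod_cast this
    have hcvb0 : (0:ℝ) ≤ (cvb : ℝ) / Fintype.card V := by positivity
    have hcgb0 : (0:ℝ) ≤ (cgb : ℝ) / Fintype.card (D → R) := by positivity
    rw [abs_le]
    push_cast
    have hv : ((cvb : ℝ) + cvg) / Fintype.card V
        = (cvb : ℝ) / Fintype.card V + (cvg : ℝ) / Fintype.card V := add_div _ _ _
    have hgg : ((cgb : ℝ) + cgg) / Fintype.card (D → R)
        = (cgb : ℝ) / Fintype.card (D → R) + (cgg : ℝ) / Fintype.card (D → R) := add_div _ _ _
    constructor
    · linarith [hv, hgg, r1, r2, r3, r4, hcvb0, hcgb0]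
    · linarith [hv, hgg, r1, r2, r3, r4, hcvb0, hcgb0]
  -- global bad-mass bound
  have hswap : ∑ u : U, (((tuples R t).filter (fun a => BAD (queryList nq a) u)).card : ℝ)
      = ∑ a ∈ tuples R t,
          ((Finset.univ.filter (fun u : U => BAD (queryList nq a) u)).card : ℝ) := by
    push_cast [Finset.card_filter]
    rw [Finset.sum_comm]
  have hBA : ∑ u : U, (((tuples R t).filter (fun a => BAD (queryList nq a) u)).card : ℝ)
      ≤ ε * Fintype.card U * (Fintype.card R : ℝ) ^ t := by
    rw [hswap]
    calc ∑ a ∈ tuples R t,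
          ((Finset.univ.filter (fun u : U => BAD (queryList nq a) u)).card : ℝ)
        ≤ ∑ _a ∈ tuples R t, ε * Fintype.card U := by
          apply Finset.sum_le_sum
          intro a ha
          have halen : a.length = t := (mem_tuples t a).mp ha
          exact h2 (queryList nq a)
            (by rw [queryList_length, halen]) (hdistinct a (le_of_eq halen))
      _ = ((tuples R t).card : ℝ) * (ε * Fintype.card U) := by
          rw [Finset.sum_const, nsmul_eq_mul]
      _ ≤ ((Fintype.card R : ℝ) ^ t) * (ε * Fintype.card U) := by
          apply mul_le_mul_of_nonneg_right
          · exact_mod_cast card_tuples_le t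
          · positivity
      _ = ε * Fintype.card U * (Fintype.card R : ℝ) ^ t := by ring
  -- decompose the product count
  have hprod : ((Finset.univ.filter (fun uv : U × V =>
        out (transcript nq (f uv.1 uv.2) t) = true)).card : ℝ)
      = ∑ u : U, (((Finset.univ : Finset V).filter
          (fun v => out (transcript nq (f u v) t) = true)).card : ℝ) := by
    push_cast [card_filter_prod (fun (u : U) (v : V) => out (transcript nq (f u v) t) = true)]
    norm_num
  set Ng := ((Finset.univ.filter (fun g : D → R =>
      out (transcript nq g t) = true)).card : ℝ) with hNg
  have hrepr : ((Finset.univ.filter (fun uv : U × V =>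
        out (transcript nq (f uv.1 uv.2) t) = true)).card : ℝ)
        / (Fintype.card U * Fintype.card V)
      - Ng / Fintype.card (D → R)
      = ∑ u : U, ((((Finset.univ : Finset V).filter
            (fun v => out (transcript nq (f u v) t) = true)).card : ℝ) / Fintype.card V
          - Ng / Fintype.card (D → R)) / Fintype.card U := by
    rw [← Finset.sum_div, Finset.sum_sub_distrib, ← Finset.sum_div, ← hprod,
      Finset.sum_const, Finset.card_univ, nsmul_eq_mul]
    field_simp
  rw [hrepr]
  calc |∑ u : U, ((((Finset.univ : Finset V).filter
            (fun v => out (transcript nq (f u v) t) = true)).card : ℝ) / Fintype.card V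
          - Ng / Fintype.card (D → R)) / Fintype.card U|
      ≤ ∑ u : U, |((((Finset.univ : Finset V).filter
            (fun v => out (transcript nq (f u v) t) = true)).card : ℝ) / Fintype.card V
          - Ng / Fintype.card (D → R)) / Fintype.card U| :=
        Finset.abs_sum_le_sum_abs _ _
    _ ≤ ∑ u : U, ((((tuples R t).filter (fun a => BAD (queryList nq a) u)).card : ℝ)
          / (Fintype.card R : ℝ) ^ t) / Fintype.card U := by
        apply Finset.sum_le_sum
        intro u _
        rw [abs_div, abs_of_pos hcU]
        gcongr
        exact key u
    _ = (∑ u : U, (((tuples R t).filter (fun a => BAD (queryList nq a) u)).card : ℝ))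
          / (Fintype.card R : ℝ) ^ t / Fintype.card U := by
        rw [← Finset.sum_div, ← Finset.sum_div]
    _ ≤ (ε * Fintype.card U * (Fintype.card R : ℝ) ^ t)
          / (Fintype.card R : ℝ) ^ t / Fintype.card U := by
        gcongr
    _ = ε := by
        field_simp
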